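/- Let α∈ℝ^k, d>0, let F⊆ℝ^k be a measurable set, and let Y be an ℝ^k-valued random variable such that ‖Y−α‖≤d almost surely on the event {Y∈F}. Set M_F = E[(Y−α)·1_{Y∈F}]. Let f:ℝ^k→ℝ be measurable and let ε>0, and suppose there exists an affine function l:ℝ^k→ℝ such that |f(x)−l(x)|<ε for all x with ‖x−α‖≤d. If f(α+M_F)−f(α)<−5ε, then E[(f(Y)−f(α))·1_{Y∈F}]<−ε. -/

import Mathlib

set_option maxHeartbeats 1000000


open MeasureTheory

/-- modified principle of local linearity: if `‖Y − α‖ ≤ d` a.s. on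
the event `{Y ∈ F}`, `f` is within `ε` of an affine function on the ball of radius
`d` around `α`, and `f(α + M_F) − f(α) < −5ε` where `M_F = E[(Y − α)·1_{Y∈F}]`,
then `E[(f(Y) − f(α))·1_{Y∈F}] < −ε`. -/
theorem stmt9 {k : ℕ} {Ω : Type*} [MeasurableSpace Ω]
    (μ : Measure Ω) [IsProbabilityMeasure μ]
    (Y : Ω → EuclideanSpace ℝ (Fin k)) (hY : Measurable Y)
    (α : EuclideanSpace ℝ (Fin k)) (d : ℝ) (hd : 0 < d)
    (F : Set (EuclideanSpace ℝ (Fin k))) (hF : MeasurableSet F)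
    (hbound : ∀ᵐ ω ∂μ, Y ω ∈ F → ‖Y ω - α‖ ≤ d)
    (f : EuclideanSpace ℝ (Fin k) → ℝ) (hf : Measurable f)
    (ε : ℝ) (hε : 0 < ε) (l : EuclideanSpace ℝ (Fin k) →ᵃ[ℝ] ℝ)
    (hl : ∀ x : EuclideanSpace ℝ (Fin k), ‖x - α‖ ≤ d → |f x - l x| < ε)
    (hdrift : f (α + ∫ ω in Y ⁻¹' F, (Y ω - α) ∂μ) - f α < -(5 * ε)) :
    (∫ ω in Y ⁻¹' F, (f (Y ω) - f α) ∂μ) < -ε := by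
  set ν := μ.restrict (Y ⁻¹' F) with hν
  have hA : MeasurableSet (Y ⁻¹' F) := hY hF
  have hbound' : ∀ᵐ ω ∂ν, ‖Y ω - α‖ ≤ d := by
    rw [hν, ae_restrict_iff' hA]
    filter_upwards [hbound] with ω h hω using h hω
  have hνuniv : ν Set.univ ≤ 1 := by
    rw [hν, Measure.restrict_apply_univ]
    exact (measure_mono (Set.subset_univ _)).trans (by simp)
  have hνfin : (ν Set.univ).toReal ≤ 1 := by
    have := ENNReal.toReal_mono (by norm_num) hνuniv
    simpa using this
  have hmeas : AEStronglyMeasurable (fun ω => Y ω - α) ν :=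
    ((hY.sub measurable_const).aestronglyMeasurable)
  have hint : Integrable (fun ω => Y ω - α) ν := by
    refine Integrable.mono' (integrable_const d) hmeas ?_
    filter_upwards [hbound'] with ω h using h
  set M : EuclideanSpace ℝ (Fin k) := ∫ ω, (Y ω - α) ∂ν with hM
  have hMnorm : ‖M‖ ≤ d := by
    calc ‖M‖ ≤ ∫ ω, ‖Y ω - α‖ ∂ν := norm_integral_le_integral_norm _
    _ ≤ ∫ _ω, d ∂ν := by
        refine integral_mono_of_nonneg (Filter.Eventually.of_forall fun ω => norm_nonneg _)
          (integrable_const d) ?_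
        filter_upwards [hbound'] with ω h using h
    _ = d * (ν Set.univ).toReal := by simp [mul_comm, measureReal_def]
    _ ≤ d * 1 := by nlinarith
    _ = d := mul_one d
  set L : EuclideanSpace ℝ (Fin k) →L[ℝ] ℝ := l.linear.toContinuousLinearMap with hL
  have hlM : l (α + M) = L M + l α := by
    have := l.map_vadd α M
    simpa [hL, add_comm] using this
  have hfαM : |f (α + M) - l (α + M)| < ε := by
    refine hl _ ?_
    simpa using hMnorm
  have hfα : |f α - l α| < ε := hl α (by simp [hd.le])
  have hLM : L M < -(3 * ε) := by
    have h1 := abs_lt.1 hfαM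
    have h2 := abs_lt.1 hfα
    have := hdrift
    rw [hlM] at h1
    linarith [h1.1, h1.2, h2.1, h2.2]
  have hptwise : ∀ᵐ ω ∂ν, f (Y ω) - f α ≤ L (Y ω - α) + 2 * ε := by
    filter_upwards [hbound'] with ω h
    have h1 := abs_lt.1 (hl (Y ω) h)
    have h2 := abs_lt.1 hfα
    have hly : l (Y ω) = L (Y ω - α) + l α := by
      have := l.map_vadd α (Y ω - α)
      simpa [hL, add_comm, sub_add_cancel] using this
    rw [hly] at h1
    linarith [h1.1, h1.2, h2.1, h2.2]
  have hCbound : ∀ᵐ ω ∂ν, ‖f (Y ω) - f α‖ ≤ 2 * ε + ‖L‖ * d := by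
    filter_upwards [hbound'] with ω h
    have h1 := abs_lt.1 (hl (Y ω) h)
    have h2 := abs_lt.1 hfα
    have hly : l (Y ω) = L (Y ω - α) + l α := by
      have := l.map_vadd α (Y ω - α)
      simpa [hL, add_comm, sub_add_cancel] using this
    have hLb : |L (Y ω - α)| ≤ ‖L‖ * d := by
      calc |L (Y ω - α)| = ‖L (Y ω - α)‖ := rfl
      _ ≤ ‖L‖ * ‖Y ω - α‖ := L.le_opNorm _
      _ ≤ ‖L‖ * d := by nlinarith [norm_nonneg L]
    rw [Real.norm_eq_abs, abs_le]
    rw [hly] at h1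
    constructor
    · have := abs_le.1 hLb
      linarith [h1.1, h2.2, this.1]
    · have := abs_le.1 hLb
      linarith [h1.2, h2.1, this.2]
  have hintf : Integrable (fun ω => f (Y ω) - f α) ν :=
    Integrable.mono' (integrable_const (2 * ε + ‖L‖ * d))
      (((hf.comp hY).sub measurable_const).aestronglyMeasurable) hCbound
  have hintL : Integrable (fun ω => L (Y ω - α) + 2 * ε) ν :=
    (L.integrable_comp hint).add (integrable_const _)
  calc (∫ ω in Y ⁻¹' F, (f (Y ω) - f α) ∂μ)
      ≤ ∫ ω, (L (Y ω - α) + 2 * ε) ∂ν := integral_mono_ae hintf hintL hptwise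
    _ = L M + 2 * ε * (ν Set.univ).toReal := by
        rw [integral_add (L.integrable_comp hint) (integrable_const _),
          L.integral_comp_comm hint]
        simp [mul_comm, measureReal_def, hM]
    _ ≤ L M + 2 * ε := by nlinarith
    _ < -ε := by linarith
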